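/- In the simplex S of t-space on n taxa (after scaling so tree height is at most 1) whose vertex set is V = {(0,...,0,1,...,1) with i ones : 0 ≤ i ≤ n−1} in R^{n−1}, a facet of S is shared by another simplex of t-space if and only if it contains both the all-zeros vertex (0,...,0) and the all-ones vertex (1,...,1). -/

import Mathlib

noncomputable section

/-- Partitions of the taxon set `{1, …, n}`. -/
abbrev TreePartition (n : ℕ) := Finpartition (Finset.univ : Finset (Fin n))

/-- A ranked binary tree topology on `n` labelled leaves, encoded as a maximal merging
chain of partitions: it starts with the partition into singletons, ends with the one-block
partition, and each step merges exactly two blocks. -/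
def IsMergeChain (n : ℕ) (c : Fin n → TreePartition n) : Prop :=
  (∀ j : Fin n, (j : ℕ) = 0 →
      (c j).parts = Finset.univ.image (fun x : Fin n => ({x} : Finset (Fin n)))) ∧
  (∀ j : Fin n, (j : ℕ) = n - 1 → (c j).parts = {Finset.univ}) ∧
  (∀ j : Fin n, ∀ h : (j : ℕ) + 1 < n,
    ∃ A ∈ (c j).parts, ∃ B ∈ (c j).parts, A ≠ B ∧
      (c ⟨(j : ℕ) + 1, h⟩).parts = insert (A ∪ B) (((c j).parts.erase A).erase B))

/-- The set of ranked binary tree topologies on `n` taxa with all internal nodes of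
pairwise distinct ranks. -/
abbrev RankedTopology (n : ℕ) := {c : Fin n → TreePartition n // IsMergeChain n c}

/-- The vertex of the t-space simplex with `j` trailing ones:
`(0, …, 0, 1, …, 1) ∈ ℝ^(n-1)`. -/
def vtx (n j : ℕ) : EuclideanSpace ℝ (Fin (n - 1)) :=
  WithLp.toLp 2 (fun m => if n - 1 - j ≤ (m : ℕ) then 1 else 0)

section TSPAux
set_option linter.unusedSectionVars false

open Finset

variable {α : Type*} [DecidableEq α] {s : Finset α}

/-- If `C` is nonempty, contained in `X` and disjoint from `Y`, then `X ≠ Y`. -/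
lemma tsp_ne {C X Y : Finset α} (hC : C.Nonempty) (hs : C ⊆ X) (hd : Disjoint C Y) :
    X ≠ Y := by
  rintro rfl
  exact hC.ne_empty (disjoint_self.mp (hd.mono_right hs))

lemma tsp_union_not_mem (P : Finpartition s) {X Y : Finset α}
    (hX : X ∈ P.parts) (hY : Y ∈ P.parts) (hXY : X ≠ Y) : X ∪ Y ∉ P.parts := by
  intro h
  have hXne := P.nonempty_of_mem_parts hX
  have hYne := P.nonempty_of_mem_parts hY
  have hne : X ∪ Y ≠ X := tsp_ne hYne subset_union_right (P.disjoint hY hX hXY.symm)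
  have hdis : Disjoint (X ∪ Y) X := P.disjoint h hX hne
  exact hXne.ne_empty (disjoint_self.mp (hdis.mono_left subset_union_left))

/-- Merge two blocks of a finpartition. -/
def tspMerge (P : Finpartition s) (A B : Finset α) (hA : A ∈ P.parts) (hB : B ∈ P.parts)
    (hAB : A ≠ B) : Finpartition s where
  parts := insert (A ∪ B) ((P.parts.erase A).erase B)
  supIndep := by
    rw [Finset.supIndep_iff_pairwiseDisjoint]
    intro x hx y hy hxy
    simp only [coe_insert, Set.mem_insert_iff, mem_coe, mem_erase] at hx hy
    rcases hx with rfl | ⟨hxB, hxA, hx⟩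
    · rcases hy with rfl | ⟨hyB, hyA, hy⟩
      · exact absurd rfl hxy
      · exact Finset.disjoint_union_left.mpr
          ⟨P.disjoint hA hy (Ne.symm hyA), P.disjoint hB hy (Ne.symm hyB)⟩
    · rcases hy with rfl | ⟨hyB, hyA, hy⟩
      · exact (Finset.disjoint_union_right.mpr
          ⟨P.disjoint hx hA hxA, P.disjoint hx hB hxB⟩)
      · exact P.disjoint hx hy hxy
  sup_parts := by
    have h1 : insert A (insert B ((P.parts.erase A).erase B)) = P.parts := by
      rw [Finset.insert_erase (Finset.mem_erase.mpr ⟨hAB.symm, hB⟩),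
        Finset.insert_erase hA]
    calc (insert (A ∪ B) ((P.parts.erase A).erase B)).sup id
        = (A ∪ B) ⊔ ((P.parts.erase A).erase B).sup id := Finset.sup_insert
      _ = A ⊔ (B ⊔ ((P.parts.erase A).erase B).sup id) := by
          simp only [Finset.sup_eq_union, Finset.union_assoc]
      _ = (insert A (insert B ((P.parts.erase A).erase B))).sup id := by
          simp [Finset.sup_insert]
      _ = s := by rw [h1, P.sup_parts]
  bot_notMem := by
    intro h
    rcases Finset.mem_insert.mp h with h | h
    · exact (P.nonempty_of_mem_parts hA).ne_empty
        (Finset.subset_empty.mp (h ▸ subset_union_left : A ⊆ (⊥ : Finset α)))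
    · exact P.bot_notMem (Finset.mem_of_mem_erase (Finset.mem_of_mem_erase h))

@[simp] lemma tspMerge_parts (P : Finpartition s) (A B : Finset α) (hA hB hAB) :
    (tspMerge P A B hA hB hAB).parts = insert (A ∪ B) ((P.parts.erase A).erase B) := rfl

lemma tsp_swap_nested (P0 P1 P2 : Finpartition s) {A B C : Finset α}
    (hA : A ∈ P0.parts) (hB : B ∈ P0.parts) (hAB : A ≠ B)
    (h1 : P1.parts = insert (A ∪ B) ((P0.parts.erase A).erase B))
    (hCmem : C ∈ P1.parts) (hCne : C ≠ A ∪ B)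
    (h2 : P2.parts = insert (C ∪ (A ∪ B)) ((P1.parts.erase C).erase (A ∪ B))) :
    ∃ Q : Finpartition s, Q ≠ P1 ∧
      (∃ X ∈ P0.parts, ∃ Y ∈ P0.parts, X ≠ Y ∧
        Q.parts = insert (X ∪ Y) ((P0.parts.erase X).erase Y)) ∧
      (∃ E ∈ Q.parts, ∃ F ∈ Q.parts, E ≠ F ∧
        P2.parts = insert (E ∪ F) ((Q.parts.erase E).erase F)) := by
  have hAne := P0.nonempty_of_mem_parts hA
  have hBne := P0.nonempty_of_mem_parts hB
  rcases Finset.mem_erase.mp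
      ((Finset.mem_insert.mp (h1 ▸ hCmem)).resolve_left hCne) with ⟨hCB, hC0'⟩
  rcases Finset.mem_erase.mp hC0' with ⟨hCA, hC0⟩
  have hCne0 := P0.nonempty_of_mem_parts hC0
  refine ⟨tspMerge P0 A C hA hC0 (Ne.symm hCA), ?_, ⟨A, hA, C, hC0, Ne.symm hCA, rfl⟩, ?_⟩
  · -- B is a part of Q but not of P1
    have hBQ : B ∈ (tspMerge P0 A C hA hC0 (Ne.symm hCA)).parts := by
      rw [tspMerge_parts]
      exact Finset.mem_insert_of_mem
        (Finset.mem_erase.mpr ⟨Ne.symm hCB, Finset.mem_erase.mpr ⟨hAB.symm, hB⟩⟩)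
    have hBP1 : B ∉ P1.parts := by
      rw [h1]
      intro h
      rcases Finset.mem_insert.mp h with h | h
      · exact tsp_ne hAne Finset.subset_union_left (P0.disjoint hA hB hAB) h.symm
      · exact (Finset.mem_erase.mp h).1 rfl
    intro h
    exact hBP1 (h ▸ hBQ)
  · refine ⟨A ∪ C, Finset.mem_insert_self _ _, B, ?_, ?_, ?_⟩
    · exact Finset.mem_insert_of_mem
        (Finset.mem_erase.mpr ⟨Ne.symm hCB, Finset.mem_erase.mpr ⟨hAB.symm, hB⟩⟩)
    · exact tsp_ne hAne Finset.subset_union_left (P0.disjoint hA hB hAB)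
    · -- the parts equality
      have hABnot : A ∪ B ∉ (P0.parts.erase A).erase B := fun h =>
        tsp_union_not_mem P0 hA hB hAB (Finset.mem_of_mem_erase (Finset.mem_of_mem_erase h))
      have hACnot : A ∪ C ∉ (P0.parts.erase A).erase C := fun h =>
        tsp_union_not_mem P0 hA hC0 (Ne.symm hCA) (Finset.mem_of_mem_erase (Finset.mem_of_mem_erase h))
      have hABnot' : A ∪ B ∉ ((P0.parts.erase A).erase B).erase C :=
        fun h => hABnot (Finset.mem_of_mem_erase h)
      have hACB : B ≠ A ∪ C :=
        (tsp_ne hAne Finset.subset_union_left (P0.disjoint hA hB hAB)).symm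
      rw [h2, h1, Finset.erase_insert_of_ne (Ne.symm hCne), Finset.erase_insert hABnot',
        tspMerge_parts, Finset.erase_insert hACnot, Finset.erase_right_comm]
      congr 1
      ext x
      simp only [Finset.mem_union]
      tauto

lemma tsp_swap_disj (P0 P1 P2 : Finpartition s) {A B C D : Finset α}
    (hA : A ∈ P0.parts) (hB : B ∈ P0.parts) (hAB : A ≠ B)
    (h1 : P1.parts = insert (A ∪ B) ((P0.parts.erase A).erase B))
    (hCmem : C ∈ P1.parts) (hDmem : D ∈ P1.parts) (hCD : C ≠ D)
    (hCne : C ≠ A ∪ B) (hDne : D ≠ A ∪ B)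
    (h2 : P2.parts = insert (C ∪ D) ((P1.parts.erase C).erase D)) :
    ∃ Q : Finpartition s, Q ≠ P1 ∧
      (∃ X ∈ P0.parts, ∃ Y ∈ P0.parts, X ≠ Y ∧
        Q.parts = insert (X ∪ Y) ((P0.parts.erase X).erase Y)) ∧
      (∃ E ∈ Q.parts, ∃ F ∈ Q.parts, E ≠ F ∧
        P2.parts = insert (E ∪ F) ((Q.parts.erase E).erase F)) := by
  have hAne := P0.nonempty_of_mem_parts hA
  have hBne := P0.nonempty_of_mem_parts hB
  rcases Finset.mem_erase.mp
      ((Finset.mem_insert.mp (h1 ▸ hCmem)).resolve_left hCne) with ⟨hCB, hC0'⟩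
  rcases Finset.mem_erase.mp hC0' with ⟨hCA, hC0⟩
  rcases Finset.mem_erase.mp
      ((Finset.mem_insert.mp (h1 ▸ hDmem)).resolve_left hDne) with ⟨hDB, hD0'⟩
  rcases Finset.mem_erase.mp hD0' with ⟨hDA, hD0⟩
  have hCne0 := P0.nonempty_of_mem_parts hC0
  have hDne0 := P0.nonempty_of_mem_parts hD0
  have hCDA : C ∪ D ≠ A := tsp_ne hCne0 Finset.subset_union_left (P0.disjoint hC0 hA hCA)
  have hCDB : C ∪ D ≠ B := tsp_ne hCne0 Finset.subset_union_left (P0.disjoint hC0 hB hCB)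
  have hABC : A ∪ B ≠ C := tsp_ne hAne Finset.subset_union_left (P0.disjoint hA hC0 (Ne.symm hCA))
  have hABD : A ∪ B ≠ D := tsp_ne hAne Finset.subset_union_left (P0.disjoint hA hD0 (Ne.symm hDA))
  have hCDAB : C ∪ D ≠ A ∪ B :=
    tsp_ne hCne0 Finset.subset_union_left (Finset.disjoint_union_right.mpr
      ⟨P0.disjoint hC0 hA hCA, P0.disjoint hC0 hB hCB⟩)
  refine ⟨tspMerge P0 C D hC0 hD0 hCD, ?_, ⟨C, hC0, D, hD0, hCD, rfl⟩, ?_⟩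
  · intro h
    have hmem : C ∪ D ∈ P1.parts := by
      rw [← h, tspMerge_parts]; exact Finset.mem_insert_self _ _
    rw [h1] at hmem
    rcases Finset.mem_insert.mp hmem with h' | h'
    · exact hCDAB h'
    · exact tsp_union_not_mem P0 hC0 hD0 hCD
        (Finset.mem_of_mem_erase (Finset.mem_of_mem_erase h'))
  · refine ⟨A, ?_, B, ?_, hAB, ?_⟩
    · rw [tspMerge_parts]
      exact Finset.mem_insert_of_mem
        (Finset.mem_erase.mpr ⟨Ne.symm hDA, Finset.mem_erase.mpr ⟨Ne.symm hCA, hA⟩⟩)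
    · rw [tspMerge_parts]
      exact Finset.mem_insert_of_mem
        (Finset.mem_erase.mpr ⟨Ne.symm hDB, Finset.mem_erase.mpr ⟨Ne.symm hCB, hB⟩⟩)
    · rw [h2, h1, tspMerge_parts,
        Finset.erase_insert_of_ne hABC, Finset.erase_insert_of_ne hABD,
        Finset.erase_insert_of_ne hCDA, Finset.erase_insert_of_ne hCDB,
        Finset.insert_comm]
      congr 2
      ext x
      simp only [Finset.mem_erase]
      tauto

lemma tsp_swap (P0 P1 P2 : Finpartition s) {A B C D : Finset α}
    (hA : A ∈ P0.parts) (hB : B ∈ P0.parts) (hAB : A ≠ B)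
    (h1 : P1.parts = insert (A ∪ B) ((P0.parts.erase A).erase B))
    (hCmem : C ∈ P1.parts) (hDmem : D ∈ P1.parts) (hCD : C ≠ D)
    (h2 : P2.parts = insert (C ∪ D) ((P1.parts.erase C).erase D)) :
    ∃ Q : Finpartition s, Q ≠ P1 ∧
      (∃ X ∈ P0.parts, ∃ Y ∈ P0.parts, X ≠ Y ∧
        Q.parts = insert (X ∪ Y) ((P0.parts.erase X).erase Y)) ∧
      (∃ E ∈ Q.parts, ∃ F ∈ Q.parts, E ≠ F ∧
        P2.parts = insert (E ∪ F) ((Q.parts.erase E).erase F)) := by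
  rcases eq_or_ne D (A ∪ B) with rfl | hDne
  · exact tsp_swap_nested P0 P1 P2 hA hB hAB h1 hCmem hCD h2
  · rcases eq_or_ne C (A ∪ B) with rfl | hCne
    · refine tsp_swap_nested P0 P1 P2 hA hB hAB h1 hDmem hDne ?_
      rw [h2, Finset.union_comm, Finset.erase_right_comm]
    · exact tsp_swap_disj P0 P1 P2 hA hB hAB h1 hCmem hDmem hCD hCne hDne h2

end TSPAux

/-- In the simplex of t-space on `n` taxa corresponding to a ranked topology `c` (scaled
so that the tree height is at most `1`), the facet obtained by omitting the vertex `vtx n i`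
is shared by another simplex of t-space (i.e. there is a different ranked topology
agreeing with `c` at every level except the one forgotten on this facet) if and only if
the facet contains both the all-zeros vertex `(0,…,0)` and the all-ones vertex
`(1,…,1)`. -/
theorem shared_facets_of_tspace_simplex (n : ℕ) (hn : 3 ≤ n)
    (c : RankedTopology n) (i : ℕ) (hi : i ≤ n - 1) :
    (∃ c' : RankedTopology n, c' ≠ c ∧
        ∀ j : Fin n, (j : ℕ) ≠ n - 1 - i → c'.1 j = c.1 j) ↔
      (vtx n 0 ∈ convexHull ℝ (vtx n '' {j | j ≤ n - 1 ∧ j ≠ i}) ∧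
       vtx n (n - 1) ∈ convexHull ℝ (vtx n '' {j | j ≤ n - 1 ∧ j ≠ i})) := by

  constructor
  · rintro ⟨c', hne, hagree⟩
    have hi0 : i ≠ 0 := by
      rintro rfl
      apply hne
      refine Subtype.ext (funext fun j => ?_)
      by_cases hj : (j : ℕ) = n - 1 - 0
      · exact Finpartition.ext ((c'.2.2.1 j (by omega)).trans (c.2.2.1 j (by omega)).symm)
      · exact hagree j hj
    have hin : i ≠ n - 1 := by
      rintro rfl
      apply hne
      refine Subtype.ext (funext fun j => ?_)
      by_cases hj : (j : ℕ) = n - 1 - (n - 1)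
      · exact Finpartition.ext ((c'.2.1 j (by omega)).trans (c.2.1 j (by omega)).symm)
      · exact hagree j hj
    exact ⟨subset_convexHull ℝ _ ⟨0, ⟨Nat.zero_le _, fun h => hi0 h.symm⟩, rfl⟩,
      subset_convexHull ℝ _ ⟨n - 1, ⟨le_rfl, fun h => hin h.symm⟩, rfl⟩⟩
  · rintro ⟨h0, h1⟩
    have hi0 : i ≠ 0 := by
      rintro rfl
      have hsub : convexHull ℝ (vtx n '' {j | j ≤ n - 1 ∧ j ≠ 0}) ⊆
          {x : EuclideanSpace ℝ (Fin (n - 1)) | x ⟨n - 2, by omega⟩ = 1} := by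
        apply convexHull_min
        · rintro _ ⟨j, ⟨hj1, hj2⟩, rfl⟩
          simp only [Set.mem_setOf_eq, vtx]
          rw [if_pos]
          show n - 1 - j ≤ n - 2
          omega
        · intro x hx y hy a b ha hb hab
          simp only [Set.mem_setOf_eq] at hx hy ⊢
          have heval : (a • x + b • y) (⟨n - 2, by omega⟩ : Fin (n - 1)) =
              a * x ⟨n - 2, by omega⟩ + b * y ⟨n - 2, by omega⟩ := rfl
          rw [heval, hx, hy, mul_one, mul_one, hab]
      have hmem := hsub h0
      simp only [Set.mem_setOf_eq, vtx] at hmem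
      rw [if_neg] at hmem
      · exact zero_ne_one hmem
      · show ¬ (n - 1 - 0 ≤ n - 2)
        omega
    have hin : i ≠ n - 1 := by
      rintro rfl
      have hsub : convexHull ℝ (vtx n '' {j | j ≤ n - 1 ∧ j ≠ n - 1}) ⊆
          {x : EuclideanSpace ℝ (Fin (n - 1)) | x ⟨0, by omega⟩ = 0} := by
        apply convexHull_min
        · rintro _ ⟨j, ⟨hj1, hj2⟩, rfl⟩
          simp only [Set.mem_setOf_eq, vtx]
          rw [if_neg]
          show ¬ (n - 1 - j ≤ 0)
          omega
        · intro x hx y hy a b ha hb hab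
          simp only [Set.mem_setOf_eq] at hx hy ⊢
          have heval : (a • x + b • y) (⟨0, by omega⟩ : Fin (n - 1)) =
              a * x ⟨0, by omega⟩ + b * y ⟨0, by omega⟩ := rfl
          rw [heval, hx, hy, mul_zero, mul_zero, add_zero]
      have hmem := hsub h1
      simp only [Set.mem_setOf_eq, vtx] at hmem
      rw [if_pos] at hmem
      · exact one_ne_zero hmem
      · show n - 1 - (n - 1) ≤ 0
        omega
    -- construction of the alternative chain
    set k := n - 1 - i with hk
    have hk1 : 1 ≤ k := by omega
    have hk2 : k ≤ n - 2 := by omega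
    have hkm : k - 1 < n := by omega
    have hkm1 : k - 1 + 1 < n := by omega
    have hk0 : k < n := by omega
    have hkp : k + 1 < n := by omega
    obtain ⟨A, hA, B, hB, hAB, h1'⟩ := c.2.2.2 ⟨k - 1, hkm⟩ hkm1
    obtain ⟨C, hC, D, hD, hCD, h2'⟩ := c.2.2.2 ⟨k, hk0⟩ (by show k + 1 < n; omega)
    have hfin1 : (⟨(⟨k - 1, hkm⟩ : Fin n).1 + 1, hkm1⟩ : Fin n) = ⟨k, hk0⟩ := by
      apply Fin.ext; show k - 1 + 1 = k; omega
    rw [hfin1] at h1'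
    obtain ⟨Q, hQne, ⟨X, hX, Y, hY, hXY, hQparts⟩, ⟨E, hE, F, hF, hEF, hP2⟩⟩ :=
      tsp_swap (c.1 ⟨k - 1, hkm⟩) (c.1 ⟨k, hk0⟩) (c.1 ⟨k + 1, hkp⟩)
        hA hB hAB h1' hC hD hCD h2'
    have hcf_ne : ∀ j : Fin n, j ≠ ⟨k, hk0⟩ →
        Function.update c.1 ⟨k, hk0⟩ Q j = c.1 j := fun j hj =>
      Function.update_of_ne hj _ _
    have hcf_k : Function.update c.1 ⟨k, hk0⟩ Q ⟨k, hk0⟩ = Q := Function.update_self _ _ _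
    have hchain : IsMergeChain n (Function.update c.1 ⟨k, hk0⟩ Q) := by
      refine ⟨?_, ?_, ?_⟩
      · intro j hj
        rw [hcf_ne j (by intro e; rw [e] at hj; have : k = 0 := hj; omega)]
        exact c.2.1 j hj
      · intro j hj
        rw [hcf_ne j (by intro e; rw [e] at hj; have : k = n - 1 := hj; omega)]
        exact c.2.2.1 j hj
      · intro j hjlt
        rcases eq_or_ne (j : ℕ) (k - 1) with hjk | hjk
        · have hj_eq : j = ⟨k - 1, hkm⟩ := Fin.ext hjk
          subst hj_eq
          have hj1_eq : (⟨((⟨k - 1, hkm⟩ : Fin n) : ℕ) + 1, hjlt⟩ : Fin n) = ⟨k, hk0⟩ := by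
            apply Fin.ext; show k - 1 + 1 = k; omega
          rw [hj1_eq, hcf_k,
            hcf_ne _ (by intro e; have : k - 1 = k := congrArg Fin.val e; omega)]
          exact ⟨X, hX, Y, hY, hXY, hQparts⟩
        · rcases eq_or_ne (j : ℕ) k with hjk' | hjk'
          · have hj_eq : j = ⟨k, hk0⟩ := Fin.ext hjk'
            subst hj_eq
            have hj1_eq : (⟨((⟨k, hk0⟩ : Fin n) : ℕ) + 1, hjlt⟩ : Fin n) = ⟨k + 1, hkp⟩ := by
              apply Fin.ext; show k + 1 = k + 1; rfl
            rw [hj1_eq, hcf_k,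
              hcf_ne _ (by intro e; have : k + 1 = k := congrArg Fin.val e; omega)]
            exact ⟨E, hE, F, hF, hEF, hP2⟩
          · rw [hcf_ne j (by intro e; rw [e] at hjk'; exact hjk' rfl),
              hcf_ne _ (by intro e; have : (j : ℕ) + 1 = k := congrArg Fin.val e; omega)]
            exact c.2.2.2 j hjlt
    refine ⟨⟨Function.update c.1 ⟨k, hk0⟩ Q, hchain⟩, ?_, ?_⟩
    · intro e
      have he : Function.update c.1 ⟨k, hk0⟩ Q ⟨k, hk0⟩ = c.1 ⟨k, hk0⟩ :=
        congrFun (congrArg Subtype.val e) ⟨k, hk0⟩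
      rw [hcf_k] at he
      exact hQne he
    · intro j hj
      exact hcf_ne j (by intro e; rw [e] at hj; exact hj rfl)
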